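/- Let n ≥ 3 and k ≥ 3 be integers and let t₀ be the largest real root of f_{n,k} (i.e., f_{n,k}(t₀) = 0 and f_{n,k}(t) > 0 for all t > t₀). Then for every real number t > 0, the inequality (n−1)·√(1 + 4(k−2)t) + (n−2)·√(n²t² + 4(n−1)t) ≥ (n−1) + n²·t holds if and only if t ≤ t₀; moreover equality holds if and only if t = t₀. -/

import Mathlib

/-- The cubic polynomial `f_{n,k}` from Theorem 1.4 of the paper. -/
noncomputable def fnk (n k : ℤ) (t : ℝ) : ℝ :=
  (n : ℝ) ^ 4 * t ^ 3
    - (n : ℝ) ^ 2 * (((k : ℝ) - 1) * (n : ℝ) ^ 2 - 2 * ((k : ℝ) + 2) * (n : ℝ)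
        + 2 * ((k : ℝ) + 2)) * t ^ 2
    - ((n : ℝ) - 1) * (3 * (n : ℝ) - ((k : ℝ) + 2)) * (((k : ℝ) - 1) * (n : ℝ)
        - ((k : ℝ) + 2)) * t
    - ((n : ℝ) - 1) * ((n : ℝ) - 2) ^ 2

/-- The derivative `f'_{n,k}` of the cubic `f_{n,k}`. -/
noncomputable def fnk' (n k : ℤ) (t : ℝ) : ℝ :=
  3 * (n : ℝ) ^ 4 * t ^ 2
    - 2 * (n : ℝ) ^ 2 * (((k : ℝ) - 1) * (n : ℝ) ^ 2 - 2 * ((k : ℝ) + 2) * (n : ℝ)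
        + 2 * ((k : ℝ) + 2)) * t
    - ((n : ℝ) - 1) * (3 * (n : ℝ) - ((k : ℝ) + 2)) * (((k : ℝ) - 1) * (n : ℝ)
        - ((k : ℝ) + 2))

/-- The quantity `t₁ = (n² + 2(n−1)(k−6))/(2n²)`. -/
noncomputable def tOne (n k : ℤ) : ℝ :=
  ((n : ℝ) ^ 2 + 2 * ((n : ℝ) - 1) * ((k : ℝ) - 6)) / (2 * (n : ℝ) ^ 2)



noncomputable def nQ (N K : ℝ) : ℝ := (K-1)*N^2 - 2*(K+2)*N + 2*(K+2)
noncomputable def nL (N K : ℝ) : ℝ := (N-1)*(3*N-(K+2))*((K-1)*N-(K+2))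
noncomputable def nD (N K : ℝ) : ℝ := (nQ N K)^2 + 3*(nL N K)
noncomputable def nC0 (N K : ℝ) : ℝ := 2*(nQ N K)^3 + 9*(nQ N K)*(nL N K) + 27*N^2*((N-1)*(N-2)^2)
noncomputable def nS1 (N K : ℝ) : ℝ := (3/2)*(N^2+2*(N-1)*(K-6)) - nQ N K

lemma cert2 (N K : ℝ) (hn : 3 ≤ N) (hk : 3 ≤ K) : (nS1 N K)^2 < nD N K := by
  have ha : (0:ℝ) ≤ N - 3 := by linarith
  have hb : (0:ℝ) ≤ K - 3 := by linarith
  simp only [nS1, nD, nC0, nQ, nL]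
  nlinarith [pow_nonneg hb 1, pow_nonneg hb 2, pow_nonneg ha 1,
    mul_nonneg (pow_nonneg ha 1) (pow_nonneg hb 1),
    mul_nonneg (pow_nonneg ha 1) (pow_nonneg hb 2),
    pow_nonneg ha 2,
    mul_nonneg (pow_nonneg ha 2) (pow_nonneg hb 1),
    mul_nonneg (pow_nonneg ha 2) (pow_nonneg hb 2),
    pow_nonneg ha 3,
    mul_nonneg (pow_nonneg ha 3) (pow_nonneg hb 1),
    mul_nonneg (pow_nonneg ha 3) (pow_nonneg hb 2),
    pow_nonneg ha 4,
    mul_nonneg (pow_nonneg ha 4) (pow_nonneg hb 1)]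

lemma cert1 (N K : ℝ) (hn : 3 ≤ N) (hk : 3 ≤ K) :
    (nS1 N K)^3 - 3*(nD N K)*(nS1 N K) - nC0 N K < 0 := by
  have ha : (0:ℝ) ≤ N - 3 := by linarith
  have hb : (0:ℝ) ≤ K - 3 := by linarith
  simp only [nS1, nD, nC0, nQ, nL]
  nlinarith [pow_nonneg hb 1, pow_nonneg hb 2, pow_nonneg hb 3, pow_nonneg ha 1,
    mul_nonneg (pow_nonneg ha 1) (pow_nonneg hb 1),
    mul_nonneg (pow_nonneg ha 1) (pow_nonneg hb 2),
    mul_nonneg (pow_nonneg ha 1) (pow_nonneg hb 3),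
    pow_nonneg ha 2,
    mul_nonneg (pow_nonneg ha 2) (pow_nonneg hb 1),
    mul_nonneg (pow_nonneg ha 2) (pow_nonneg hb 2),
    mul_nonneg (pow_nonneg ha 2) (pow_nonneg hb 3),
    pow_nonneg ha 3,
    mul_nonneg (pow_nonneg ha 3) (pow_nonneg hb 1),
    mul_nonneg (pow_nonneg ha 3) (pow_nonneg hb 2),
    mul_nonneg (pow_nonneg ha 3) (pow_nonneg hb 3),
    pow_nonneg ha 4,
    mul_nonneg (pow_nonneg ha 4) (pow_nonneg hb 1),
    mul_nonneg (pow_nonneg ha 4) (pow_nonneg hb 2),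
    mul_nonneg (pow_nonneg ha 4) (pow_nonneg hb 3),
    pow_nonneg ha 5,
    mul_nonneg (pow_nonneg ha 5) (pow_nonneg hb 1),
    mul_nonneg (pow_nonneg ha 5) (pow_nonneg hb 2),
    pow_nonneg ha 6,
    mul_nonneg (pow_nonneg ha 6) (pow_nonneg hb 1)]

lemma fnk_hasDeriv (n k : ℤ) (x : ℝ) : HasDerivAt (fnk n k) (fnk' n k x) x := by
  have h3 : HasDerivAt (fun t:ℝ => t^3) (3*x^2) x := by simpa using hasDerivAt_pow 3 x
  have h2 : HasDerivAt (fun t:ℝ => t^2) (2*x) x := by simpa using hasDerivAt_pow 2 x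
  have h1 : HasDerivAt (fun t:ℝ => t) 1 x := hasDerivAt_id x
  have H := (((h3.const_mul ((n:ℝ)^4)).sub
      (h2.const_mul ((n:ℝ)^2 * (((k:ℝ)-1)*(n:ℝ)^2 - 2*((k:ℝ)+2)*(n:ℝ) + 2*((k:ℝ)+2))))).sub
      (h1.const_mul (((n:ℝ)-1)*(3*(n:ℝ)-((k:ℝ)+2))*(((k:ℝ)-1)*(n:ℝ)-((k:ℝ)+2))))).sub_const
      (((n:ℝ)-1)*((n:ℝ)-2)^2)
  have hfun : (fun t:ℝ => fnk n k t) = (fun t:ℝ =>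
      ((n:ℝ)^4 * t^3 - (n:ℝ)^2 * (((k:ℝ)-1)*(n:ℝ)^2 - 2*((k:ℝ)+2)*(n:ℝ) + 2*((k:ℝ)+2)) * t^2
        - ((n:ℝ)-1)*(3*(n:ℝ)-((k:ℝ)+2))*(((k:ℝ)-1)*(n:ℝ)-((k:ℝ)+2)) * t)
        - ((n:ℝ)-1)*((n:ℝ)-2)^2) := by
    funext t
    simp only [fnk]
  rw [show fnk n k = fun t => fnk n k t from rfl, hfun]
  refine H.congr_deriv ?_
  simp only [fnk']
  ring

lemma fnk_continuous (n k : ℤ) : Continuous (fnk n k) := by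
  unfold fnk; continuity

lemma claimC (n k : ℤ) (hn : 3 ≤ n) (hk : 3 ≤ k) {t : ℝ} (ht : tOne n k ≤ t)
    (hd : fnk' n k t ≤ 0) : fnk n k t < 0 := by
  have hn3 : (3:ℝ) ≤ (n:ℝ) := by exact_mod_cast hn
  have hk3 : (3:ℝ) ≤ (k:ℝ) := by exact_mod_cast hk
  have hN2 : (0:ℝ) < (n:ℝ)^2 := by nlinarith
  set N := (n:ℝ) with hN
  set K := (k:ℝ) with hK
  set s : ℝ := 3*N^2*t - nQ N K with hs
  have hs1 : nS1 N K ≤ s := by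
    have h := (div_le_iff₀ (by positivity : (0:ℝ) < 2*N^2)).mp ht
    simp only [nS1, hs]; linarith
  have hsq : s^2 ≤ nD N K := by
    have hring : s^2 = 3 * fnk' n k t + nD N K := by
      simp only [hs, nD, nQ, nL, fnk']; ring
    linarith
  have h2 := cert2 N K hn3 hk3
  have h1 := cert1 N K hn3 hk3
  have hkey : 27*N^2*(fnk n k t) = s^3 - 3*(nD N K)*s - nC0 N K := by
    simp only [hs, nD, nC0, nQ, nL, fnk]; ring
  have hfac : 0 ≤ 3*(nD N K) - s^2 - s*(nS1 N K) - (nS1 N K)^2 := by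
    nlinarith [sq_nonneg (s - nS1 N K)]
  have hmul : 0 ≤ (s - nS1 N K) * (3*(nD N K) - s^2 - s*(nS1 N K) - (nS1 N K)^2) :=
    mul_nonneg (by linarith) hfac
  have hring2 : s^3 - 3*(nD N K)*s - nC0 N K =
      ((nS1 N K)^3 - 3*(nD N K)*(nS1 N K) - nC0 N K)
        - (s - nS1 N K) * (3*(nD N K) - s^2 - s*(nS1 N K) - (nS1 N K)^2) := by ring
  have h27 : 27*N^2*(fnk n k t) < 0 := by rw [hkey, hring2]; linarith
  nlinarith [h27, hN2]

lemma ft1_neg (n k : ℤ) (hn : 3 ≤ n) (hk : 3 ≤ k) : fnk n k (tOne n k) < 0 := by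
  have hn3 : (3:ℝ) ≤ (n:ℝ) := by exact_mod_cast hn
  have hk3 : (3:ℝ) ≤ (k:ℝ) := by exact_mod_cast hk
  have hN2 : (0:ℝ) < (n:ℝ)^2 := by nlinarith
  have h1 := cert1 (n:ℝ) (k:ℝ) hn3 hk3
  have hkey : 27*(n:ℝ)^2*(fnk n k (tOne n k)) =
      (nS1 (n:ℝ) (k:ℝ))^3 - 3*(nD (n:ℝ) (k:ℝ))*(nS1 (n:ℝ) (k:ℝ)) - nC0 (n:ℝ) (k:ℝ) := by
    simp only [nS1, nD, nC0, nQ, nL, fnk, tOne]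
    field_simp
    ring
  nlinarith [hN2]

section Between
variable (n k : ℤ) (hn : 3 ≤ n) (hk : 3 ≤ k)
  (t₀ : ℝ) (ht₀ : fnk n k t₀ = 0) (ht₀max : ∀ t : ℝ, t₀ < t → 0 < fnk n k t)

include hn hk ht₀ ht₀max in
lemma tOne_lt_t0 : tOne n k < t₀ := by
  have h1 := ft1_neg n k hn hk
  rcases lt_trichotomy (tOne n k) t₀ with h | h | h
  · exact h
  · rw [h, ht₀] at h1; exact absurd h1 (lt_irrefl 0)
  · exact absurd (ht₀max _ h) (by linarith)

include hn hk ht₀ ht₀max in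
lemma fnk_nonpos_between : ∀ v ∈ Set.Icc (tOne n k) t₀, fnk n k v ≤ 0 := by
  have ht1t0 := tOne_lt_t0 n k hn hk t₀ ht₀ ht₀max
  obtain ⟨M, hM, hmax⟩ := isCompact_Icc.exists_isMaxOn (Set.nonempty_Icc.2 ht1t0.le)
    ((fnk_continuous n k).continuousOn)
  have hfM : fnk n k M ≤ 0 := by
    by_contra hpos
    push_neg at hpos
    have hM1 : tOne n k < M := by
      rcases eq_or_lt_of_le hM.1 with h | h
      · exfalso; rw [← h] at hpos; linarith [ft1_neg n k hn hk]
      · exact h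
    have hM2 : M < t₀ := by
      rcases eq_or_lt_of_le hM.2 with h | h
      · exfalso; rw [h, ht₀] at hpos; exact lt_irrefl 0 hpos
      · exact h
    have hloc : IsLocalMax (fnk n k) M := hmax.isLocalMax (Icc_mem_nhds hM1 hM2)
    have hder : fnk' n k M = 0 := by
      have := hloc.deriv_eq_zero
      rwa [(fnk_hasDeriv n k M).deriv] at this
    exact absurd (claimC n k hn hk hM1.le hder.le) (by linarith)
  exact fun v hv => le_trans (hmax hv) hfM

include hn hk ht₀ ht₀max in
lemma fnk_neg_between : ∀ v : ℝ, tOne n k < v → v < t₀ → fnk n k v < 0 := by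
  intro v hv1 hv2
  have hA := fnk_nonpos_between n k hn hk t₀ ht₀ ht₀max
  rcases lt_or_eq_of_le (hA v ⟨hv1.le, hv2.le⟩) with h | h
  · exact h
  · exfalso
    have hmax : IsMaxOn (fnk n k) (Set.Icc (tOne n k) t₀) v := by
      intro w hw; simp only [Set.mem_setOf_eq]; rw [h]; exact hA w hw
    have hloc : IsLocalMax (fnk n k) v := hmax.isLocalMax (Icc_mem_nhds hv1 hv2)
    have hder : fnk' n k v = 0 := by
      have := hloc.deriv_eq_zero
      rwa [(fnk_hasDeriv n k v).deriv] at this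
    have := claimC n k hn hk hv1.le hder.le
    rw [h] at this; exact lt_irrefl 0 this

end Between

lemma lt_of_sq_lt_sq'' (x y : ℝ) (hx : 0 ≤ x) (hy : 0 ≤ y) (h : x^2 < y^2) : x < y := by
  nlinarith

lemma eq_of_sq_eq_sq'' (x y : ℝ) (hx : 0 ≤ x) (hy : 0 ≤ y) (h : x^2 = y^2) : x = y :=
  le_antisymm (by nlinarith) (by nlinarith)


/-- Let `t₀` be the largest real root of `f_{n,k}` (`n, k ≥ 3`). For every
`t > 0`, `(n−1)√(1 + 4(k−2)t) + (n−2)√(n²t² + 4(n−1)t) ≥ (n−1) + n²t` iff `t ≤ t₀`,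
with equality iff `t = t₀`. -/
theorem sqrt_inequality_iff_le_largest_root (n k : ℤ) (hn : 3 ≤ n) (hk : 3 ≤ k)
    (t₀ : ℝ) (ht₀ : fnk n k t₀ = 0) (ht₀max : ∀ t : ℝ, t₀ < t → 0 < fnk n k t) :
    ∀ t : ℝ, 0 < t →
      ((((n : ℝ) - 1) * Real.sqrt (1 + 4 * ((k : ℝ) - 2) * t)
          + ((n : ℝ) - 2) * Real.sqrt ((n : ℝ) ^ 2 * t ^ 2 + 4 * ((n : ℝ) - 1) * t)
          ≥ ((n : ℝ) - 1) + (n : ℝ) ^ 2 * t) ↔ t ≤ t₀) ∧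
      ((((n : ℝ) - 1) * Real.sqrt (1 + 4 * ((k : ℝ) - 2) * t)
          + ((n : ℝ) - 2) * Real.sqrt ((n : ℝ) ^ 2 * t ^ 2 + 4 * ((n : ℝ) - 1) * t)
          = ((n : ℝ) - 1) + (n : ℝ) ^ 2 * t) ↔ t = t₀) := by
  intro t ht
  have hn3 : (3:ℝ) ≤ (n:ℝ) := by exact_mod_cast hn
  have hk3 : (3:ℝ) ≤ (k:ℝ) := by exact_mod_cast hk
  have ht1t0 : tOne n k < t₀ := tOne_lt_t0 n k hn hk t₀ ht₀ ht₀max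
  set N := (n:ℝ) with hN
  set K := (k:ℝ) with hK
  have hN2 : (0:ℝ) < N ^ 2 := by nlinarith
  set A := Real.sqrt (1 + 4 * (K - 2) * t) with hA
  set B := Real.sqrt (N ^ 2 * t ^ 2 + 4 * (N - 1) * t) with hB
  have hA2 : A ^ 2 = 1 + 4 * (K - 2) * t := Real.sq_sqrt (by nlinarith)
  have hB2 : B ^ 2 = N ^ 2 * t ^ 2 + 4 * (N - 1) * t := Real.sq_sqrt (by nlinarith)
  have hApos : 0 < A := Real.sqrt_pos.mpr (by nlinarith)
  have hBpos : 0 < B := Real.sqrt_pos.mpr (by nlinarith)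
  set S := (N - 1) * A + (N - 2) * B with hS
  set C := (N - 1) + N ^ 2 * t with hC
  have hSpos : 0 < S := by
    have h1 : 0 < (N - 1) * A := mul_pos (by linarith) hApos
    have h2 : 0 ≤ (N - 2) * B := mul_nonneg (by linarith) hBpos.le
    simp only [hS]; linarith
  have hCpos : 0 < C := by simp only [hC]; nlinarith
  set R : ℝ := 2 * N ^ 2 * t ^ 2 - (N ^ 2 + 2 * (N - 1) * (K - 6)) * t with hR
  have hRfac : R = 2 * N ^ 2 * t * (t - tOne n k) := by
    simp only [hR, tOne, ← hN, ← hK]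
    field_simp
  have hNt : 0 < 2 * N ^ 2 * t := mul_pos (by linarith) ht
  have id1 : S ^ 2 - C ^ 2 = 2 * (N - 1) * ((N - 2) * (A * B) - R) := by
    simp only [hS, hC, hR]
    linear_combination ((N - 1) ^ 2) * hA2 + ((N - 2) ^ 2) * hB2
  have id2 : ((N - 2) * (A * B)) ^ 2 = R ^ 2 - 4 * t * fnk n k t := by
    simp only [hS, hC, hR, fnk, ← hN, ← hK]
    linear_combination ((N - 2) ^ 2 * B ^ 2) * hA2 + ((N - 2) ^ 2 * (1 + 4 * (K - 2) * t)) * hB2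
  have hxnn : 0 ≤ (N - 2) * (A * B) := mul_nonneg (by linarith) (mul_nonneg hApos.le hBpos.le)
  -- case t < t₀ : S > C
  have hlt : t < t₀ → C < S := by
    intro hlt
    have hDpos : 0 < (N - 2) * (A * B) - R := by
      rcases le_or_gt t (tOne n k) with hcase | hcase
      · have hRle : R ≤ 0 := by
          rw [hRfac]
          exact mul_nonpos_of_nonneg_of_nonpos hNt.le (by linarith)
        have h3 : 0 < (N - 2) * (A * B) := mul_pos (by linarith) (mul_pos hApos hBpos)
        linarith
      · have hf := fnk_neg_between n k hn hk t₀ ht₀ ht₀max t hcase hlt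
        have hRpos : 0 < R := by rw [hRfac]; exact mul_pos hNt (by linarith)
        have hp : 0 < t * (-(fnk n k t)) := mul_pos ht (by linarith)
        have h4 : R ^ 2 < ((N - 2) * (A * B)) ^ 2 := by linarith [id2, hp]
        linarith [lt_of_sq_lt_sq'' R ((N - 2) * (A * B)) hRpos.le hxnn h4]
    have hS2 : C ^ 2 < S ^ 2 := by
      have h5 : 0 < 2 * (N - 1) * ((N - 2) * (A * B) - R) := mul_pos (by linarith) hDpos
      linarith [id1]
    exact lt_of_sq_lt_sq'' C S hCpos.le hSpos.le hS2
  -- case t = t₀ : S = C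
  have heqc : t = t₀ → S = C := by
    intro heq
    have hf : fnk n k t = 0 := by rw [heq]; exact ht₀
    have hRpos : 0 < R := by
      rw [hRfac]; exact mul_pos hNt (by rw [heq]; linarith)
    have hx2 : ((N - 2) * (A * B)) ^ 2 = R ^ 2 := by rw [id2, hf]; ring
    have hxR : (N - 2) * (A * B) = R := eq_of_sq_eq_sq'' _ _ hxnn hRpos.le hx2
    have hS2 : S ^ 2 = C ^ 2 := by
      have h6 : 2 * (N - 1) * ((N - 2) * (A * B) - R) = 0 := by rw [hxR]; ring
      linarith [id1]
    exact eq_of_sq_eq_sq'' S C hSpos.le hCpos.le hS2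
  -- case t > t₀ : S < C
  have hgt : t₀ < t → S < C := by
    intro hgt
    have hf := ht₀max t hgt
    have hRpos : 0 < R := by rw [hRfac]; exact mul_pos hNt (by linarith)
    have hp : 0 < t * fnk n k t := mul_pos ht hf
    have h4 : ((N - 2) * (A * B)) ^ 2 < R ^ 2 := by linarith [id2, hp]
    have hDneg : (N - 2) * (A * B) - R < 0 := by
      linarith [lt_of_sq_lt_sq'' ((N - 2) * (A * B)) R hxnn hRpos.le h4]
    have hS2 : S ^ 2 < C ^ 2 := by
      have h5 : 2 * (N - 1) * ((N - 2) * (A * B) - R) < 0 :=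
        mul_neg_of_pos_of_neg (by linarith) hDneg
      linarith [id1]
    exact lt_of_sq_lt_sq'' S C hSpos.le hCpos.le hS2
  constructor
  · constructor
    · intro hge
      by_contra hcon
      push_neg at hcon
      exact absurd hge (not_le.mpr (hgt hcon))
    · intro hle
      rcases lt_or_eq_of_le hle with h | h
      · exact le_of_lt (hlt h)
      · exact le_of_eq (heqc h).symm
  · constructor
    · intro heq
      rcases lt_trichotomy t t₀ with h | h | h
      · exact absurd heq (by intro hh; linarith [hlt h])
      · exact h
      · exact absurd heq (by intro hh; linarith [hgt h])
    · exact fun h => heqc h
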